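/- Let (A_i), (B_i), (A'_i), (B'_i) be weakly decreasing summable sequences of nonnegative reals and γ, γ' ≥ 0. If e^{γ y} Π_{i=1}^∞ (1 + B_i y)/(1 - A_i y)^θ = e^{γ' y} Π_{i=1}^∞ (1 + B'_i y)/(1 - A'_i y)^θ for all y in a real interval [-2, 0] (with θ > 0 fixed), then A_i = A'_i and B_i = B'_i for all i, and γ = γ'. -/

import Mathlib

open Filter Topology Real

namespace Stmt6

lemma finite_ge {A : ℕ → ℝ} (hAs : Summable A) {r : ℝ} (hr : 0 < r) :
    {i | r ≤ A i}.Finite := by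
  obtain ⟨N, hN⟩ := eventually_atTop.mp (hAs.tendsto_atTop_zero.eventually (gt_mem_nhds hr))
  apply (Set.finite_Iio N).subset
  intro i hi
  simp only [Set.mem_setOf_eq] at hi
  by_contra h
  exact absurd hi (not_le.2 (hN i (not_lt.1 fun hc => h hc)))

lemma le_ncard_iff {A : ℕ → ℝ} (hA : Antitone A) (hAs : Summable A) {r : ℝ} (hr : 0 < r)
    (i : ℕ) : i + 1 ≤ {j | r ≤ A j}.ncard ↔ r ≤ A i := by
  constructor
  · intro h
    by_contra hc
    push_neg at hc
    have hsub : {j | r ≤ A j} ⊆ ↑(Finset.range i) := by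
      intro j hj
      simp only [Set.mem_setOf_eq] at hj
      simp only [Finset.coe_range, Set.mem_Iio]
      by_contra hji
      exact absurd (le_trans hj (hA (not_lt.1 hji))) (not_le.2 hc)
    have := Set.ncard_le_ncard hsub (Finset.range i).finite_toSet
    rw [Set.ncard_coe_finset, Finset.card_range] at this
    omega
  · intro h
    have hsub : ↑(Finset.range (i + 1)) ⊆ {j | r ≤ A j} := by
      intro j hj
      simp only [Finset.coe_range, Set.mem_Iio] at hj
      exact Set.mem_setOf_eq ▸ le_trans h (hA (by omega))
    have := Set.ncard_le_ncard hsub (finite_ge hAs hr)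
    rwa [Set.ncard_coe_finset, Finset.card_range] at this

/-- If the counting functions agree above `m`, the sequences agree index-wise above `m`. -/
lemma eq_above {A A' : ℕ → ℝ} (hA : Antitone A) (hA' : Antitone A')
    (hAs : Summable A) (hA's : Summable A') {m : ℝ} (hm : 0 ≤ m)
    (h : ∀ r, m < r → {j | r ≤ A j}.ncard = {j | r ≤ A' j}.ncard)
    {i : ℕ} (hi : m < A i) : A i = A' i := by
  have hr : 0 < A i := lt_of_le_of_lt hm hi
  have h1 : A i ≤ A' i := by
    have := (le_ncard_iff hA hAs hr i).mpr le_rfl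
    rw [h _ hi] at this
    exact (le_ncard_iff hA' hA's hr i).mp this
  have hi' : m < A' i := lt_of_lt_of_le hi h1
  have h2 : A' i ≤ A i := by
    have := (le_ncard_iff hA' hA's (lt_of_le_of_lt hm hi') i).mpr le_rfl
    rw [← h _ hi'] at this
    exact (le_ncard_iff hA hAs (lt_of_le_of_lt hm hi') i).mp this
  linarith

lemma exists_gap {A : ℕ → ℝ} (hAs : Summable A) {m : ℝ} (hm : 0 < m) :
    ∃ ε > 0, ∀ i, A i ≤ m - ε ∨ m ≤ A i := by
  have hfin : {i | m / 2 ≤ A i ∧ A i < m}.Finite :=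
    (finite_ge hAs (by linarith)).subset fun i hi => hi.1
  rcases hfin.toFinset.eq_empty_or_nonempty with he | hne
  · refine ⟨m / 2, by linarith, fun i => ?_⟩
    rcases le_or_gt m (A i) with h | h
    · exact Or.inr h
    rcases le_or_gt (m / 2) (A i) with h2 | h2
    · exfalso
      have : i ∈ hfin.toFinset := by simp [hfin.mem_toFinset]; exact ⟨h2, h⟩
      simp [he] at this
    · left; linarith
  · set s := hfin.toFinset.sup' hne A with hs
    have hslt : s < m := by
      rw [hs, Finset.sup'_lt_iff]
      intro i hi
      exact (hfin.mem_toFinset.mp hi).2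
    have hsge : m / 2 ≤ s := by
      obtain ⟨i, hi⟩ := hne
      exact le_trans (hfin.mem_toFinset.mp hi).1 (Finset.le_sup' A hi)
    refine ⟨m - s, by linarith, fun i => ?_⟩
    rcases le_or_gt m (A i) with h | h
    · exact Or.inr h
    rcases le_or_gt (m / 2) (A i) with h2 | h2
    · left
      have : i ∈ hfin.toFinset := hfin.mem_toFinset.mpr ⟨h2, h⟩
      have h3 : A i ≤ s := Finset.le_sup' A this
      linarith
    · left; linarith

lemma tsum_indicator_eq {A : ℕ → ℝ} (hAs : Summable A) {m : ℝ} (hm : 0 < m) :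
    ∑' i, (if A i = m then (1 : ℝ) else 0) = ({i | A i = m}.ncard : ℝ) := by
  have hfin : {i | A i = m}.Finite :=
    (finite_ge hAs hm).subset fun i hi => by
      simp only [Set.mem_setOf_eq] at hi ⊢; exact hi.ge
  rw [tsum_eq_sum (s := hfin.toFinset) (fun i hi => by
    simp only [Set.Finite.mem_toFinset, Set.mem_setOf_eq] at hi
    simp [hi])]
  rw [Set.ncard_eq_toFinset_card _ hfin]
  calc ∑ i ∈ hfin.toFinset, (if A i = m then (1 : ℝ) else 0)
      = ∑ _i ∈ hfin.toFinset, (1 : ℝ) := Finset.sum_congr rfl (fun i hi => by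
        simp only [Set.Finite.mem_toFinset, Set.mem_setOf_eq] at hi
        simp [hi])
    _ = (hfin.toFinset.card : ℝ) := by rw [Finset.sum_const, nsmul_eq_mul, mul_one]


lemma summable_pow {A : ℕ → ℝ} (hA : Antitone A) (hA0 : ∀ i, 0 ≤ A i)
    (hAs : Summable A) (k : ℕ) : Summable (fun i => A i ^ (k + 1)) := by
  apply Summable.of_nonneg_of_le (fun i => pow_nonneg (hA0 i) _)
    (fun i => ?_) (hAs.mul_left (A 0 ^ k))
  calc A i ^ (k + 1) = A i ^ k * A i := by ring
    _ ≤ A 0 ^ k * A i := mul_le_mul_of_nonneg_right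
        (pow_le_pow_left₀ (hA0 i) (hA (Nat.zero_le i)) k) (hA0 i)

lemma tsum_pow_le {A : ℕ → ℝ} (hA : Antitone A) (hA0 : ∀ i, 0 ≤ A i)
    (hAs : Summable A) (k : ℕ) : ∑' i, A i ^ (k + 1) ≤ A 0 ^ k * ∑' i, A i := by
  rw [← tsum_mul_left]
  apply Summable.tsum_le_tsum _ (summable_pow hA hA0 hAs k) (hAs.mul_left _)
  intro i
  calc A i ^ (k + 1) = A i ^ k * A i := by ring
    _ ≤ A 0 ^ k * A i := mul_le_mul_of_nonneg_right
        (pow_le_pow_left₀ (hA0 i) (hA (Nat.zero_le i)) k) (hA0 i)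

/-- Key limit: the normalized power-sum difference tends to the difference of
multiplicities at the top discrepancy level `m`. -/
lemma tendsto_key {A A' : ℕ → ℝ} (hA : Antitone A) (hA' : Antitone A')
    (hA0 : ∀ i, 0 ≤ A i) (hA'0 : ∀ i, 0 ≤ A' i)
    (hAs : Summable A) (hA's : Summable A') {m : ℝ} (hm : 0 < m)
    (hab : ∀ i, m < A i → A i = A' i) (hab' : ∀ i, m < A' i → A' i = A i) :
    Tendsto (fun k => ∑' i, ((A i / m) ^ k - (A' i / m) ^ k)) atTop
      (𝓝 (({i | A i = m}.ncard : ℝ) - ({i | A' i = m}.ncard : ℝ))) := by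
  have hboth : ∀ i, ¬ (m < A i) → ¬ (m < A' i) → A i ≤ m ∧ A' i ≤ m := by
    intro i h1 h2; exact ⟨not_lt.1 h1, not_lt.1 h2⟩
  have heval : (({i | A i = m}.ncard : ℝ) - ({i | A' i = m}.ncard : ℝ))
      = ∑' i, ((if A i = m then (1:ℝ) else 0) - (if A' i = m then (1:ℝ) else 0)) := by
    rw [Summable.tsum_sub, tsum_indicator_eq hAs hm, tsum_indicator_eq hA's hm]
    · exact summable_of_ne_finset_zero (s := (Set.Finite.subset (finite_ge hAs hm)
        (show {i | A i = m} ⊆ {i | m ≤ A i} from fun i hi => hi.ge)).toFinset) (fun i hi => by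
          simp only [Set.Finite.mem_toFinset, Set.mem_setOf_eq] at hi
          simp [hi])
    · exact summable_of_ne_finset_zero (s := (Set.Finite.subset (finite_ge hA's hm)
        (show {i | A' i = m} ⊆ {i | m ≤ A' i} from fun i hi => hi.ge)).toFinset) (fun i hi => by
          simp only [Set.Finite.mem_toFinset, Set.mem_setOf_eq] at hi
          simp [hi])
  rw [heval]
  apply tendsto_tsum_of_dominated_convergence (bound := fun i => A i / m + A' i / m)
  · exact (hAs.div_const m).add (hA's.div_const m)
  · intro i
    rcases lt_or_ge m (A i) with h | h
    · have he := hab i h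
      have h1 : ¬ (A i = m) := ne_of_gt h
      have h2 : ¬ (A' i = m) := he ▸ h1
      simp only [he, sub_self, h1, h2, if_false]
      simpa using tendsto_const_nhds
    · rcases lt_or_ge m (A' i) with h' | h'
      · exfalso; have := hab' i h'; linarith [this ▸ h']
      · have hc : ∀ (X : ℕ → ℝ) (h0 : 0 ≤ X i) (hle : X i ≤ m),
            Tendsto (fun k => (X i / m) ^ k) atTop (𝓝 (if X i = m then (1:ℝ) else 0)) := by
          intro X h0 hle
          rcases eq_or_lt_of_le hle with he | hlt
          · simpa [he, div_self (ne_of_gt hm)] using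
              (tendsto_const_nhds : Tendsto (fun _ : ℕ => (1:ℝ)) atTop (𝓝 1))
          · have : ¬ (X i = m) := ne_of_lt hlt
            simp only [this, if_false]
            exact tendsto_pow_atTop_nhds_zero_of_lt_one (div_nonneg h0 hm.le)
              ((div_lt_one hm).mpr hlt)
        exact (hc A (hA0 i) h).sub (hc A' (hA'0 i) h')
  · filter_upwards [eventually_ge_atTop 1] with k hk i
    rcases lt_or_ge m (A i) with h | h
    · have he := hab i h
      have hz : (A i / m) ^ k - (A' i / m) ^ k = 0 := by rw [he, sub_self]
      rw [hz, norm_zero]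
      exact add_nonneg (div_nonneg (hA0 i) hm.le) (div_nonneg (hA'0 i) hm.le)
    · rcases lt_or_ge m (A' i) with h' | h'
      · exfalso; have := hab' i h'; linarith [this ▸ h']
      · have b1 : ∀ (X : ℕ → ℝ) (h0 : 0 ≤ X i) (hle : X i ≤ m), (X i / m) ^ k ≤ X i / m := by
          intro X h0 hle
          apply pow_le_of_le_one (div_nonneg h0 hm.le) ((div_le_one hm).mpr hle) (by omega)
        have n1 : (0:ℝ) ≤ (A i / m) ^ k := pow_nonneg (div_nonneg (hA0 i) hm.le) k
        have n2 : (0:ℝ) ≤ (A' i / m) ^ k := pow_nonneg (div_nonneg (hA'0 i) hm.le) k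
        rw [Real.norm_eq_abs, abs_sub_le_iff]
        constructor
        · linarith [b1 A (hA0 i) h, b1 A' (hA'0 i) h']
        · linarith [b1 A (hA0 i) h, b1 A' (hA'0 i) h']

theorem seq_eq (θ : ℝ) (hθ : 0 < θ) (A B A' B' : ℕ → ℝ)
    (hA : Antitone A) (hB : Antitone B) (hA' : Antitone A') (hB' : Antitone B')
    (hA0 : ∀ i, 0 ≤ A i) (hB0 : ∀ i, 0 ≤ B i) (hA'0 : ∀ i, 0 ≤ A' i) (hB'0 : ∀ i, 0 ≤ B' i)
    (hAs : Summable A) (hBs : Summable B) (hA's : Summable A') (hB's : Summable B')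
    (hpow : ∀ k : ℕ, 1 ≤ k →
      θ * (∑' i, A i ^ (k+1)) - (-1:ℝ)^(k+1) * (∑' i, B i ^ (k+1))
        = θ * (∑' i, A' i ^ (k+1)) - (-1:ℝ)^(k+1) * (∑' i, B' i ^ (k+1))) :
    ∀ i, A i = A' i ∧ B i = B' i := by
  have hcount : ∀ r : ℝ, 0 < r →
      ({j | r ≤ A j}.ncard = {j | r ≤ A' j}.ncard ∧
       {j | r ≤ B j}.ncard = {j | r ≤ B' j}.ncard) := by
    by_contra hc
    push_neg at hc
    obtain ⟨r0, hr0, hr0'⟩ := hc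
    set S : Set ℝ := {r | 0 < r ∧ ¬ ({j | r ≤ A j}.ncard = {j | r ≤ A' j}.ncard ∧
       {j | r ≤ B j}.ncard = {j | r ≤ B' j}.ncard)} with hSdef
    have hSne : S.Nonempty := ⟨r0, hr0, not_and.mpr hr0'⟩
    have hbdd : BddAbove S := by
      refine ⟨max (max (A 0) (A' 0)) (max (B 0) (B' 0)) + 1, fun r hr => ?_⟩
      by_contra hlt
      push_neg at hlt
      apply hr.2
      have hemp : ∀ X : ℕ → ℝ, Antitone X →
          X 0 ≤ max (max (A 0) (A' 0)) (max (B 0) (B' 0)) → {j | r ≤ X j} = ∅ := by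
        intro X hX hXle
        ext j
        simp only [Set.mem_setOf_eq, Set.mem_empty_iff_false, iff_false, not_le]
        calc X j ≤ X 0 := hX (Nat.zero_le j)
          _ < r := by linarith
      rw [hemp A hA (le_max_of_le_left (le_max_left _ _)),
          hemp A' hA' (le_max_of_le_left (le_max_right _ _)),
          hemp B hB (le_max_of_le_right (le_max_left _ _)),
          hemp B' hB' (le_max_of_le_right (le_max_right _ _))]
      exact ⟨rfl, rfl⟩
    set m := sSup S with hmdef
    have hm : 0 < m := lt_of_lt_of_le hr0 (le_csSup hbdd ⟨hr0, not_and.mpr hr0'⟩)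
    have hupP : ∀ r, m < r → ({j | r ≤ A j}.ncard = {j | r ≤ A' j}.ncard ∧
       {j | r ≤ B j}.ncard = {j | r ≤ B' j}.ncard) := by
      intro r hrm
      by_contra hP
      exact absurd (le_csSup hbdd (show r ∈ S from ⟨lt_trans hm hrm, hP⟩)) (not_le.2 hrm)
    have habA : ∀ i, m < A i → A i = A' i :=
      fun i hi => eq_above hA hA' hAs hA's hm.le (fun r hr => (hupP r hr).1) hi
    have habA' : ∀ i, m < A' i → A' i = A i :=
      fun i hi => eq_above hA' hA hA's hAs hm.le (fun r hr => ((hupP r hr).1).symm) hi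
    have habB : ∀ i, m < B i → B i = B' i :=
      fun i hi => eq_above hB hB' hBs hB's hm.le (fun r hr => (hupP r hr).2) hi
    have habB' : ∀ i, m < B' i → B' i = B i :=
      fun i hi => eq_above hB' hB hB's hBs hm.le (fun r hr => ((hupP r hr).2).symm) hi
    -- limits
    set fA : ℕ → ℝ := fun k => ∑' i, ((A i / m) ^ k - (A' i / m) ^ k) with hfA
    set fB : ℕ → ℝ := fun k => ∑' i, ((B i / m) ^ k - (B' i / m) ^ k) with hfB
    set LA : ℝ := ({i | A i = m}.ncard : ℝ) - ({i | A' i = m}.ncard : ℝ) with hLAdef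
    set LB : ℝ := ({i | B i = m}.ncard : ℝ) - ({i | B' i = m}.ncard : ℝ) with hLBdef
    have hLA : Tendsto fA atTop (𝓝 LA) :=
      tendsto_key hA hA' hA0 hA'0 hAs hA's hm habA habA'
    have hLB : Tendsto fB atTop (𝓝 LB) :=
      tendsto_key hB hB' hB0 hB'0 hBs hB's hm habB habB'
    have hrel : ∀ k : ℕ, 1 ≤ k → θ * fA (k+1) = (-1:ℝ)^(k+1) * fB (k+1) := by
      intro k hk
      have key : ∀ (X X' : ℕ → ℝ), Antitone X → Antitone X' → (∀ i, 0 ≤ X i) →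
          (∀ i, 0 ≤ X' i) → Summable X → Summable X' →
          (∑' i, X i ^ (k+1)) - (∑' i, X' i ^ (k+1))
            = m ^ (k+1) * ∑' i, ((X i / m) ^ (k+1) - (X' i / m) ^ (k+1)) := by
        intro X X' hX hX' hX0 hX'0 hXs hX's
        rw [← tsum_mul_left, ← Summable.tsum_sub (summable_pow hX hX0 hXs k) (summable_pow hX' hX'0 hX's k)]
        apply tsum_congr
        intro i
        rw [div_pow, div_pow]
        field_simp
      have e1 := key A A' hA hA' hA0 hA'0 hAs hA's
      have e2 := key B B' hB hB' hB0 hB'0 hBs hB's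
      have e3 : θ * ((∑' i, A i ^ (k+1)) - (∑' i, A' i ^ (k+1)))
          = (-1:ℝ)^(k+1) * ((∑' i, B i ^ (k+1)) - (∑' i, B' i ^ (k+1))) := by
        have := hpow k hk
        ring_nf
        ring_nf at this
        linarith
      rw [e1, e2] at e3
      have hmp : (m : ℝ) ^ (k+1) ≠ 0 := pow_ne_zero _ (ne_of_gt hm)
      apply mul_left_cancel₀ hmp
      calc m ^ (k+1) * (θ * fA (k+1)) = θ * (m ^ (k+1) * fA (k+1)) := by ring
        _ = (-1:ℝ)^(k+1) * (m ^ (k+1) * fB (k+1)) := e3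
        _ = m ^ (k+1) * ((-1:ℝ)^(k+1) * fB (k+1)) := by ring
    have hse : Tendsto (fun n : ℕ => 2*n+2) atTop atTop :=
      tendsto_atTop_atTop.2 fun b => ⟨b, fun a ha => by omega⟩
    have hso : Tendsto (fun n : ℕ => 2*n+3) atTop atTop :=
      tendsto_atTop_atTop.2 fun b => ⟨b, fun a ha => by omega⟩
    have heven : θ * LA = LB := by
      have h1 : Tendsto (fun n : ℕ => θ * fA (2*n+2)) atTop (𝓝 (θ * LA)) :=
        (hLA.const_mul θ).comp hse
      have h2 : Tendsto (fun n : ℕ => θ * fA (2*n+2)) atTop (𝓝 LB) := by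
        have he : (fun n : ℕ => θ * fA (2*n+2)) = fun n : ℕ => fB (2*n+2) := by
          funext n
          rw [hrel (2*n+1) (by omega)]
          have : ((-1:ℝ))^(2*n+1+1) = 1 := Even.neg_one_pow ⟨n+1, by ring⟩
          rw [this, one_mul]
        rw [he]
        exact hLB.comp hse
      exact tendsto_nhds_unique h1 h2
    have hodd : θ * LA = -LB := by
      have h1 : Tendsto (fun n : ℕ => θ * fA (2*n+3)) atTop (𝓝 (θ * LA)) :=
        (hLA.const_mul θ).comp hso
      have h2 : Tendsto (fun n : ℕ => θ * fA (2*n+3)) atTop (𝓝 (-LB)) := by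
        have he : (fun n : ℕ => θ * fA (2*n+3)) = fun n : ℕ => -fB (2*n+3) := by
          funext n
          rw [hrel (2*n+2) (by omega)]
          have : ((-1:ℝ))^(2*n+2+1) = -1 := Odd.neg_one_pow ⟨n+1, by ring⟩
          rw [this]
          ring
        rw [he]
        exact (hLB.comp hso).neg
      exact tendsto_nhds_unique h1 h2
    have hLB0 : LB = 0 := by linarith
    have hLA0 : LA = 0 := by
      have : θ * LA = 0 := by rw [heven, hLB0]
      exact (mul_eq_zero.mp this).resolve_left (ne_of_gt hθ)
    have hcardA : {i | A i = m}.ncard = {i | A' i = m}.ncard := by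
      have := sub_eq_zero.mp hLA0
      exact_mod_cast this
    have hcardB : {i | B i = m}.ncard = {i | B' i = m}.ncard := by
      have := sub_eq_zero.mp hLB0
      exact_mod_cast this
    -- counts agree at m
    have hPm : {j | m ≤ A j}.ncard = {j | m ≤ A' j}.ncard ∧
        {j | m ≤ B j}.ncard = {j | m ≤ B' j}.ncard := by
      have hsplit : ∀ (X : ℕ → ℝ), Summable X →
          {j | m ≤ X j}.ncard = {j | m < X j}.ncard + {j | X j = m}.ncard := by
        intro X hXs
        have hu : {j | m ≤ X j} = {j | m < X j} ∪ {j | X j = m} := by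
          ext j
          simp only [Set.mem_setOf_eq, Set.mem_union]
          constructor
          · intro h
            rcases lt_or_eq_of_le h with h | h
            · exact Or.inl h
            · exact Or.inr h.symm
          · rintro (h | h)
            · exact h.le
            · exact h.ge
        have hdisj : Disjoint {j | m < X j} {j | X j = m} :=
          Set.disjoint_left.mpr fun {j} hj1 hj2 => (ne_of_gt hj1) hj2
        have hf1 : {j | m < X j}.Finite :=
          (finite_ge hXs hm).subset (fun j (hj : m < X j) => le_of_lt hj)
        have hf2 : {j | X j = m}.Finite :=
          (finite_ge hXs hm).subset (fun j (hj : X j = m) => hj.ge)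
        rw [hu, Set.ncard_union_eq hdisj hf1 hf2]
      have hgtA : {j | m < A j} = {j | m < A' j} := by
        ext j
        simp only [Set.mem_setOf_eq]
        exact ⟨fun h => (habA j h) ▸ h, fun h => (habA' j h) ▸ h⟩
      have hgtB : {j | m < B j} = {j | m < B' j} := by
        ext j
        simp only [Set.mem_setOf_eq]
        exact ⟨fun h => (habB j h) ▸ h, fun h => (habB' j h) ▸ h⟩
      constructor
      · rw [hsplit A hAs, hsplit A' hA's, hgtA, hcardA]
      · rw [hsplit B hBs, hsplit B' hB's, hgtB, hcardB]
    -- gap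
    obtain ⟨εA, hεA, hgA⟩ := exists_gap hAs hm
    obtain ⟨εA', hεA', hgA'⟩ := exists_gap hA's hm
    obtain ⟨εB, hεB, hgB⟩ := exists_gap hBs hm
    obtain ⟨εB', hεB', hgB'⟩ := exists_gap hB's hm
    set ε : ℝ := min (min εA εA') (min εB εB') with hεdef
    have hε : 0 < ε := lt_min (lt_min hεA hεA') (lt_min hεB hεB')
    have hclaim : ∀ r, m - ε < r → r ≤ m →
        ({j | r ≤ A j}.ncard = {j | r ≤ A' j}.ncard ∧
         {j | r ≤ B j}.ncard = {j | r ≤ B' j}.ncard) := by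
      intro r h1 h2
      have hset : ∀ (X : ℕ → ℝ) (εX : ℝ), εX ≥ ε → (∀ i, X i ≤ m - εX ∨ m ≤ X i) →
          {j | r ≤ X j} = {j | m ≤ X j} := by
        intro X εX hεX hg
        ext j
        simp only [Set.mem_setOf_eq]
        constructor
        · intro h
          rcases hg j with hle | hge
          · exfalso
            have : X j ≤ m - ε := le_trans hle (by linarith)
            linarith
          · exact hge
        · intro h
          linarith
      rw [hset A εA (le_trans (min_le_left _ _) (min_le_left _ _)) hgA,
          hset A' εA' (le_trans (min_le_left _ _) (min_le_right _ _)) hgA',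
          hset B εB (le_trans (min_le_right _ _) (min_le_left _ _)) hgB,
          hset B' εB' (le_trans (min_le_right _ _) (min_le_right _ _)) hgB']
      exact hPm
    obtain ⟨s, hsS, hs⟩ := exists_lt_of_lt_csSup hSne (show m - ε < m by linarith)
    have hsm : s ≤ m := le_csSup hbdd hsS
    exact hsS.2 (hclaim s hs hsm)
  -- from counting equality to pointwise equality
  have final : ∀ (X X' : ℕ → ℝ), Antitone X → Antitone X' → (∀ i, 0 ≤ X i) →
      (∀ i, 0 ≤ X' i) → Summable X → Summable X' →
      (∀ r : ℝ, 0 < r → {j | r ≤ X j}.ncard = {j | r ≤ X' j}.ncard) → ∀ i, X i = X' i := by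
    intro X X' hX hX' hX0 hX'0 hXs hX's h i
    rcases eq_or_lt_of_le (hX0 i) with h0 | h0
    · rcases eq_or_lt_of_le (hX'0 i) with h0' | h0'
      · rw [← h0, ← h0']
      · exact (eq_above hX' hX hX's hXs le_rfl (fun r hr => (h r hr).symm) h0').symm
    · exact eq_above hX hX' hXs hX's le_rfl (fun r hr => h r hr) h0
  intro i
  exact ⟨final A A' hA hA' hA0 hA'0 hAs hA's (fun r hr => (hcount r hr).1) i,
         final B B' hB hB' hB0 hB'0 hBs hB's (fun r hr => (hcount r hr).2) i⟩

/-- Uniqueness of power series coefficients from vanishing on a left interval. -/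
lemma coeff_zero {δ : ℝ} (hδ : 0 < δ) (E : ℕ → ℝ)
    (hsum : Summable (fun k => |E k| * δ ^ (k+1)))
    (h : ∀ y ∈ Set.Ioo (-δ) (0:ℝ), ∑' k, E k * y ^ (k+1) = 0) : ∀ k, E k = 0 := by
  intro k
  induction k using Nat.strong_induction_on with
  | _ k ih =>
  -- tail sum constant
  have htail : Summable (fun j => |E (j + (k+1))| * δ ^ (j + (k+1) + 1)) :=
    (summable_nat_add_iff (f := fun n => |E n| * δ ^ (n+1)) (k+1)).mpr hsum
  set C : ℝ := (∑' j, |E (j + (k+1))| * δ ^ (j + (k+1) + 1)) / δ ^ (k+2) with hC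
  have hC0 : 0 ≤ C := by
    apply div_nonneg _ (pow_nonneg hδ.le _)
    exact tsum_nonneg fun j => mul_nonneg (abs_nonneg _) (pow_nonneg hδ.le _)
  have hbound : ∀ t : ℝ, 0 < t → t < δ → |E k| * t ^ (k+1) ≤ C * t ^ (k+2) := by
    intro t ht htδ
    have hy : -t ∈ Set.Ioo (-δ) (0:ℝ) := ⟨by linarith, by linarith⟩
    have h0 := h (-t) hy
    -- summability in y
    have hsy : Summable (fun j => E j * (-t) ^ (j+1)) := by
      apply Summable.of_norm_bounded hsum
      intro j
      rw [norm_mul, norm_pow, norm_neg, Real.norm_eq_abs, Real.norm_eq_abs,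
        abs_of_pos ht]
      gcongr
      all_goals first
        | exact ht.le
        | exact htδ.le
        | exact abs_nonneg _
    have hsplit := Summable.sum_add_tsum_nat_add (f := fun j => E j * (-t) ^ (j+1)) (k+1) hsy
    rw [h0] at hsplit
    have hfirst : ∑ j ∈ Finset.range (k+1), E j * (-t) ^ (j+1) = E k * (-t) ^ (k+1) := by
      rw [Finset.sum_eq_single k]
      · intro j hj hjk
        rw [ih j (by simp at hj; omega), zero_mul]
      · intro hk
        simp at hk
    rw [hfirst] at hsplit
    have habs : |E k * (-t) ^ (k+1)| = |E k| * t ^ (k+1) := by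
      rw [abs_mul, abs_pow, abs_neg, abs_of_pos ht]
    have heq2 : E k * (-t) ^ (k+1) = - ∑' j, E (j + (k+1)) * (-t) ^ (j + (k+1) + 1) := by
      linarith
    have htails : Summable (fun j => E (j + (k+1)) * (-t) ^ (j + (k+1) + 1)) :=
      (summable_nat_add_iff (f := fun j => E j * (-t) ^ (j+1)) (k+1)).mpr hsy
    calc |E k| * t ^ (k+1) = |E k * (-t) ^ (k+1)| := habs.symm
      _ = |∑' j, E (j + (k+1)) * (-t) ^ (j + (k+1) + 1)| := by rw [heq2, abs_neg]
      _ ≤ ∑' j, |E (j + (k+1)) * (-t) ^ (j + (k+1) + 1)| := by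
          have := norm_tsum_le_tsum_norm (f := fun j => E (j + (k+1)) * (-t) ^ (j + (k+1) + 1))
            (htails.abs)
          simpa only [Real.norm_eq_abs] using this
      _ ≤ ∑' j, (t ^ (k+2) / δ ^ (k+2)) * (|E (j + (k+1))| * δ ^ (j + (k+1) + 1)) := by
          apply Summable.tsum_le_tsum _ htails.abs (htail.mul_left _)
          intro j
          rw [abs_mul, abs_pow, abs_neg, abs_of_pos ht]
          have : t ^ (j + (k+1) + 1) = t ^ (k + 2) * t ^ j := by ring
          rw [this]
          have hδj : δ ^ (j + (k+1) + 1) = δ ^ (k+2) * δ ^ j := by ring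
          rw [hδj]
          have h1 : t ^ j ≤ δ ^ j := pow_le_pow_left₀ ht.le htδ.le j
          have h2 : (0:ℝ) < δ ^ (k+2) := pow_pos hδ _
          have h3 : (0:ℝ) ≤ |E (j + (k+1))| := abs_nonneg _
          calc |E (j + (k+1))| * (t ^ (k+2) * t ^ j)
              ≤ |E (j + (k+1))| * (t ^ (k+2) * δ ^ j) := by
                apply mul_le_mul_of_nonneg_left _ h3
                apply mul_le_mul_of_nonneg_left h1 (pow_nonneg ht.le _)
            _ = t ^ (k+2) / δ ^ (k+2) * (|E (j + (k+1))| * (δ ^ (k+2) * δ ^ j)) := by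
                field_simp
      _ = (t ^ (k+2) / δ ^ (k+2)) * ∑' j, (|E (j + (k+1))| * δ ^ (j + (k+1) + 1)) := by
          rw [tsum_mul_left]
      _ = C * t ^ (k+2) := by
          rw [hC]
          field_simp
  by_contra hne
  have hpos : 0 < |E k| := abs_pos.mpr hne
  set t : ℝ := min (δ / 2) (|E k| / (2 * (C + 1))) with htdef
  have ht1 : 0 < t := lt_min (by linarith) (by positivity)
  have ht2 : t < δ := lt_of_le_of_lt (min_le_left _ _) (by linarith)
  have hb := hbound t ht1 ht2
  have htk : 0 < t ^ (k+1) := pow_pos ht1 _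
  have hb2 : |E k| ≤ C * t := by
    have : |E k| * t ^ (k+1) ≤ (C * t) * t ^ (k+1) := by
      calc |E k| * t ^ (k+1) ≤ C * t ^ (k+2) := hb
        _ = (C * t) * t ^ (k+1) := by ring
    exact le_of_mul_le_mul_right this htk
  have ht3 : t ≤ |E k| / (2 * (C + 1)) := min_le_right _ _
  have : C * t ≤ C * (|E k| / (2 * (C + 1))) := by
    apply mul_le_mul_of_nonneg_left ht3 hC0
  have hfin : |E k| ≤ C * (|E k| / (2 * (C + 1))) := le_trans hb2 this
  have h2C : 0 < 2 * (C + 1) := by linarith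
  have hkey : |E k| * (2 * (C + 1)) ≤ C * |E k| := by
    have h4 := mul_le_mul_of_nonneg_right hfin h2C.le
    calc |E k| * (2 * (C + 1)) ≤ C * (|E k| / (2 * (C + 1))) * (2 * (C + 1)) := h4
      _ = C * |E k| := by field_simp
  nlinarith [hpos, hC0]

/-- Expansion of the product as the exponential of a power series, for small negative `y`. -/
lemma expand (θ : ℝ) (A B : ℕ → ℝ) (hA : Antitone A) (hB : Antitone B)
    (hA0 : ∀ i, 0 ≤ A i) (hB0 : ∀ i, 0 ≤ B i)
    (hAs : Summable A) (hBs : Summable B) (γ : ℝ) {M y : ℝ}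
    (hM1 : 1 ≤ M) (hMA : A 0 < M) (hMB : B 0 < M)
    (hy1 : -(1/(2*M)) < y) (hy2 : y < 0) :
    Real.exp (γ * y) * ∏' i, (1 + B i * y) / (1 - A i * y) ^ θ
      = Real.exp (γ * y + ∑' (k : ℕ),
          ((θ * (∑' i, A i ^ (k+1)) - (-1:ℝ)^(k+1) * (∑' i, B i ^ (k+1))) / ((k:ℝ)+1))
            * y ^ (k+1)) := by
  have hθ' : True := trivial
  have hM0 : (0:ℝ) < M := by linarith
  have habs : |y| < 1/(2*M) := by
    rw [abs_of_neg hy2]; linarith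
  have hbd : ∀ (X : ℕ → ℝ), Antitone X → (∀ i, 0 ≤ X i) → X 0 < M →
      ∀ i, X i * |y| < 1/2 := by
    intro X hX hX0 hXM i
    have h1 : X i ≤ X 0 := hX (Nat.zero_le i)
    have h2 : 0 ≤ |y| := abs_nonneg y
    have h3 : X i * |y| ≤ X 0 * |y| := mul_le_mul_of_nonneg_right h1 h2
    have h4 : X 0 * |y| < M * (1/(2*M)) := by
      rcases eq_or_lt_of_le (hX0 0) with h0 | h0
      · rw [← h0]; simp; positivity
      · calc X 0 * |y| < X 0 * (1/(2*M)) := by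
              apply mul_lt_mul_of_pos_left habs h0
          _ ≤ M * (1/(2*M)) := by
              apply mul_le_mul_of_nonneg_right hXM.le (by positivity)
    have h5 : M * (1/(2*M)) = 1/2 := by field_simp
    linarith
  have hAy : ∀ i, |A i * y| < 1/2 := by
    intro i
    rw [abs_mul, abs_of_nonneg (hA0 i)]
    exact hbd A hA hA0 hMA i
  have hBy : ∀ i, |B i * y| < 1/2 := by
    intro i
    rw [abs_mul, abs_of_nonneg (hB0 i)]
    exact hbd B hB hB0 hMB i
  set T : ℕ → ℕ → ℝ := fun i k =>
    (θ * A i ^ (k+1) - (-1:ℝ)^(k+1) * B i ^ (k+1)) * (y ^ (k+1) / ((k:ℝ)+1)) with hT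
  -- summability of the double family
  have hgeom : ∀ (x : ℝ), 0 ≤ x → x ≤ 1/2 → ∀ k : ℕ, x ^ (k+1) ≤ x * (1/2)^k := by
    intro x h0 h1 k
    calc x ^ (k+1) = x * x ^ k := by ring
      _ ≤ x * (1/2)^k := mul_le_mul_of_nonneg_left (pow_le_pow_left₀ h0 h1 k) h0
  have hTsum : Summable (Function.uncurry T) := by
    have hf : Summable (fun i => ‖(|θ| * A i + B i) * |y|‖) := by
      have : Summable (fun i => (|θ| * A i + B i) * |y|) :=
        ((hAs.mul_left |θ|).add hBs).mul_right |y|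
      simpa only [Real.norm_eq_abs] using this.abs
    have hg : Summable (fun k => ‖((1:ℝ)/2) ^ k‖) := by
      have : Summable (fun k : ℕ => ((1:ℝ)/2) ^ k) := summable_geometric_of_lt_one (by norm_num) (by norm_num)
      simpa only [Real.norm_eq_abs] using this.abs
    apply Summable.of_norm_bounded (summable_mul_of_summable_norm hf hg)
    rintro ⟨i, k⟩
    have e1 : ‖Function.uncurry T (i, k)‖
        = |θ * A i ^ (k+1) - (-1:ℝ)^(k+1) * B i ^ (k+1)| * (|y| ^ (k+1) / ((k:ℝ)+1)) := by
      rw [Function.uncurry]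
      rw [Real.norm_eq_abs, abs_mul, abs_div, abs_pow]
      congr 1
      rw [abs_of_pos (by positivity : (0:ℝ) < (k:ℝ)+1)]
    rw [e1]
    have hk1 : (1:ℝ) ≤ (k:ℝ)+1 := by
      have : (0:ℝ) ≤ (k:ℝ) := Nat.cast_nonneg k
      linarith
    have e2 : |y| ^ (k+1) / ((k:ℝ)+1) ≤ |y| ^ (k+1) :=
      div_le_self (pow_nonneg (abs_nonneg y) _) hk1
    have e3 : |θ * A i ^ (k+1) - (-1:ℝ)^(k+1) * B i ^ (k+1)|
        ≤ |θ| * A i ^ (k+1) + B i ^ (k+1) := by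
      calc |θ * A i ^ (k+1) - (-1:ℝ)^(k+1) * B i ^ (k+1)|
          ≤ |θ * A i ^ (k+1)| + |(-1:ℝ)^(k+1) * B i ^ (k+1)| := abs_sub _ _
        _ = |θ| * A i ^ (k+1) + B i ^ (k+1) := by
            simp [abs_mul, abs_pow, abs_of_nonneg (hA0 i), abs_of_nonneg (hB0 i)]
    calc |θ * A i ^ (k+1) - (-1:ℝ)^(k+1) * B i ^ (k+1)| * (|y| ^ (k+1) / ((k:ℝ)+1))
        ≤ (|θ| * A i ^ (k+1) + B i ^ (k+1)) * |y| ^ (k+1) := by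
          apply mul_le_mul e3 e2
            (div_nonneg (pow_nonneg (abs_nonneg y) _) (by positivity))
            (add_nonneg (mul_nonneg (abs_nonneg θ) (pow_nonneg (hA0 i) _))
              (pow_nonneg (hB0 i) _))
      _ = |θ| * (A i * |y|) ^ (k+1) + (B i * |y|) ^ (k+1) := by
          rw [mul_pow, mul_pow]; ring
      _ ≤ |θ| * ((A i * |y|) * (1/2)^k) + (B i * |y|) * (1/2)^k := by
          have g1 := hgeom (A i * |y|) (mul_nonneg (hA0 i) (abs_nonneg y))
            (hbd A hA hA0 hMA i).le k
          have g2 := hgeom (B i * |y|) (mul_nonneg (hB0 i) (abs_nonneg y))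
            (hbd B hB hB0 hMB i).le k
          have : (0:ℝ) ≤ |θ| := abs_nonneg θ
          nlinarith
      _ = (|θ| * A i + B i) * |y| * (1/2)^k := by ring
  -- per-index power series of the logarithm
  have hg : ∀ i, HasSum (T i)
      (Real.log (1 + B i * y) - θ * Real.log (1 - A i * y)) := by
    intro i
    have h1 : HasSum (fun k : ℕ => (A i * y) ^ (k+1) / ((k:ℝ)+1))
        (-Real.log (1 - A i * y)) := by
      exact Real.hasSum_pow_div_log_of_abs_lt_one (x := A i * y)
        (lt_trans (hAy i) (by norm_num))
    have h2 : HasSum (fun k : ℕ => (-(B i * y)) ^ (k+1) / ((k:ℝ)+1))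
        (-Real.log (1 + B i * y)) := by
      have habs2 : |(-(B i * y))| < 1 := by
        rw [abs_neg]; exact lt_trans (hBy i) (by norm_num)
      have := Real.hasSum_pow_div_log_of_abs_lt_one habs2
      rw [sub_neg_eq_add] at this
      exact this
    have h3 := (h1.mul_left θ).sub h2
    have h4 : (fun k : ℕ => θ * ((A i * y) ^ (k+1) / ((k:ℝ)+1))
        - (-(B i * y)) ^ (k+1) / ((k:ℝ)+1)) = T i := by
      funext k
      rw [hT]
      have e : (-(B i * y)) ^ (k+1) = (-1:ℝ)^(k+1) * (B i * y) ^ (k+1) := by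
        rw [neg_pow]
      rw [e, mul_pow, mul_pow]
      ring
    have h5 : θ * -Real.log (1 - A i * y) - -Real.log (1 + B i * y)
        = Real.log (1 + B i * y) - θ * Real.log (1 - A i * y) := by ring
    rw [h4, h5] at h3
    exact h3
  -- swap the order of summation
  have hgsum : Summable (fun i => Real.log (1 + B i * y) - θ * Real.log (1 - A i * y)) := by
    apply (hTsum.prod).congr
    intro i
    exact (hg i).tsum_eq
  have hswap : ∑' i, (Real.log (1 + B i * y) - θ * Real.log (1 - A i * y))
      = ∑' (k : ℕ), ∑' i, T i k := by
    rw [← tsum_congr (fun i => (hg i).tsum_eq)]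
    exact (Summable.tsum_comm hTsum).symm
  have hinner : ∀ k : ℕ, ∑' i, T i k
      = ((θ * (∑' i, A i ^ (k+1)) - (-1:ℝ)^(k+1) * (∑' i, B i ^ (k+1))) / ((k:ℝ)+1))
          * y ^ (k+1) := by
    intro k
    rw [hT]
    rw [tsum_mul_right]
    rw [Summable.tsum_sub ((summable_pow hA hA0 hAs k).mul_left θ)
      ((summable_pow hB hB0 hBs k).mul_left ((-1:ℝ)^(k+1)))]
    rw [tsum_mul_left, tsum_mul_left]
    ring
  -- product representation
  have hfac : ∀ i, (1 + B i * y) / (1 - A i * y) ^ θ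
      = Real.exp (Real.log (1 + B i * y) - θ * Real.log (1 - A i * y)) := by
    intro i
    have hb : 0 < 1 + B i * y := by
      have := hBy i
      rw [abs_lt] at this
      linarith [this.1]
    have ha : 0 < 1 - A i * y := by
      have := hAy i
      rw [abs_lt] at this
      linarith [this.2]
    have hexp : Real.exp (Real.log (1 + B i * y) - θ * Real.log (1 - A i * y))
        = Real.exp (Real.log (1 + B i * y)) / Real.exp (Real.log (1 - A i * y) * θ) := by
      rw [← Real.exp_sub]
      congr 1
      ring
    rw [hexp, Real.exp_log hb, Real.rpow_def_of_pos ha]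
  have hprod : ∏' i, (1 + B i * y) / (1 - A i * y) ^ θ
      = Real.exp (∑' i, (Real.log (1 + B i * y) - θ * Real.log (1 - A i * y))) := by
    have h6 := hgsum.hasSum.rexp
    have h7 : (Real.exp ∘ fun i => Real.log (1 + B i * y) - θ * Real.log (1 - A i * y))
        = fun i => (1 + B i * y) / (1 - A i * y) ^ θ := by
      funext i
      simp only [Function.comp]
      exact (hfac i).symm
    rw [h7] at h6
    exact h6.tprod_eq
  rw [hprod, ← Real.exp_add]
  congr 1
  rw [hswap]
  rw [tsum_congr hinner]

lemma Dsummable (θ : ℝ) (A B : ℕ → ℝ) (hA : Antitone A) (hB : Antitone B)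
    (hA0 : ∀ i, 0 ≤ A i) (hB0 : ∀ i, 0 ≤ B i)
    (hAs : Summable A) (hBs : Summable B) {M : ℝ}
    (hM1 : 1 ≤ M) (hMA : A 0 < M) (hMB : B 0 < M) :
    Summable (fun k : ℕ =>
      |(θ * (∑' i, A i ^ (k+1)) - (-1:ℝ)^(k+1) * (∑' i, B i ^ (k+1))) / ((k:ℝ)+1)|
        * (1/(2*M)) ^ (k+1)) := by
  have hM0 : (0:ℝ) < M := by linarith
  have hδ0 : (0:ℝ) < 1/(2*M) := by positivity
  have hhalf : ∀ (X : ℕ → ℝ), (∀ i, 0 ≤ X i) → X 0 < M → X 0 * (1/(2*M)) ≤ 1/2 := by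
    intro X hX0 hXM
    have h1 : X 0 * (1/(2*M)) ≤ M * (1/(2*M)) := mul_le_mul_of_nonneg_right hXM.le hδ0.le
    have h2 : M * (1/(2*M)) = 1/2 := by field_simp
    linarith
  apply Summable.of_nonneg_of_le (fun k => by positivity) (fun k => ?_)
    ((summable_geometric_of_lt_one (by norm_num) (by norm_num : (1:ℝ)/2 < 1)).mul_left
      ((|θ| * (∑' i, A i) + (∑' i, B i)) * (1/(2*M))))
  have htsA : 0 ≤ ∑' i, A i := tsum_nonneg hA0
  have htsB : 0 ≤ ∑' i, B i := tsum_nonneg hB0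
  have hpA : (0:ℝ) ≤ ∑' i, A i ^ (k+1) := tsum_nonneg (fun i => pow_nonneg (hA0 i) _)
  have hpB : (0:ℝ) ≤ ∑' i, B i ^ (k+1) := tsum_nonneg (fun i => pow_nonneg (hB0 i) _)
  have hk1 : (1:ℝ) ≤ (k:ℝ)+1 := by
    have : (0:ℝ) ≤ (k:ℝ) := Nat.cast_nonneg k
    linarith
  have e1 : |(θ * (∑' i, A i ^ (k+1)) - (-1:ℝ)^(k+1) * (∑' i, B i ^ (k+1))) / ((k:ℝ)+1)|
      ≤ |θ| * (∑' i, A i ^ (k+1)) + (∑' i, B i ^ (k+1)) := by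
    rw [abs_div, abs_of_pos (by positivity : (0:ℝ) < (k:ℝ)+1)]
    calc |θ * (∑' i, A i ^ (k+1)) - (-1:ℝ)^(k+1) * (∑' i, B i ^ (k+1))| / ((k:ℝ)+1)
        ≤ |θ * (∑' i, A i ^ (k+1)) - (-1:ℝ)^(k+1) * (∑' i, B i ^ (k+1))| := by
          apply div_le_self (abs_nonneg _) hk1
      _ ≤ |θ * (∑' i, A i ^ (k+1))| + |(-1:ℝ)^(k+1) * (∑' i, B i ^ (k+1))| := abs_sub _ _
      _ = |θ| * (∑' i, A i ^ (k+1)) + (∑' i, B i ^ (k+1)) := by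
          simp [abs_mul, abs_of_nonneg hpA, abs_of_nonneg hpB]
  have e2 : ∑' i, A i ^ (k+1) ≤ A 0 ^ k * ∑' i, A i := tsum_pow_le hA hA0 hAs k
  have e3 : ∑' i, B i ^ (k+1) ≤ B 0 ^ k * ∑' i, B i := tsum_pow_le hB hB0 hBs k
  have e4 : (A 0 * (1/(2*M))) ^ k ≤ (1/2:ℝ) ^ k :=
    pow_le_pow_left₀ (mul_nonneg (hA0 0) hδ0.le) (hhalf A hA0 hMA) k
  have e5 : (B 0 * (1/(2*M))) ^ k ≤ (1/2:ℝ) ^ k :=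
    pow_le_pow_left₀ (mul_nonneg (hB0 0) hδ0.le) (hhalf B hB0 hMB) k
  calc |(θ * (∑' i, A i ^ (k+1)) - (-1:ℝ)^(k+1) * (∑' i, B i ^ (k+1))) / ((k:ℝ)+1)|
        * (1/(2*M)) ^ (k+1)
      ≤ (|θ| * (∑' i, A i ^ (k+1)) + (∑' i, B i ^ (k+1))) * (1/(2*M)) ^ (k+1) := by
        apply mul_le_mul_of_nonneg_right e1 (by positivity)
    _ ≤ (|θ| * (A 0 ^ k * ∑' i, A i) + (B 0 ^ k * ∑' i, B i)) * (1/(2*M)) ^ (k+1) := by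
        apply mul_le_mul_of_nonneg_right _ (by positivity)
        have h6 : |θ| * (∑' i, A i ^ (k+1)) ≤ |θ| * (A 0 ^ k * ∑' i, A i) :=
          mul_le_mul_of_nonneg_left e2 (abs_nonneg θ)
        linarith
    _ = (|θ| * (∑' i, A i) * (A 0 * (1/(2*M)))^k
          + (∑' i, B i) * (B 0 * (1/(2*M)))^k) * (1/(2*M)) := by
        rw [mul_pow, mul_pow]
        ring
    _ ≤ (|θ| * (∑' i, A i) * (1/2:ℝ)^k + (∑' i, B i) * (1/2:ℝ)^k) * (1/(2*M)) := by
        apply mul_le_mul_of_nonneg_right _ hδ0.le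
        have h7 : |θ| * (∑' i, A i) * (A 0 * (1/(2*M)))^k ≤ |θ| * (∑' i, A i) * (1/2:ℝ)^k :=
          mul_le_mul_of_nonneg_left e4 (by positivity)
        have h8 : (∑' i, B i) * (B 0 * (1/(2*M)))^k ≤ (∑' i, B i) * (1/2:ℝ)^k :=
          mul_le_mul_of_nonneg_left e5 htsB
        linarith
    _ = (|θ| * (∑' i, A i) + (∑' i, B i)) * (1/(2*M)) * (1/2:ℝ)^k := by ring

end Stmt6

/-- Lemma 4.3 (uniqueness of parameters): if two data sets
`(A, B, γ)` and `(A', B', γ')` of weakly decreasing summable nonnegative sequences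
and nonnegative constants yield the same function
`e^{γy} Π (1 + B_i y)/(1 - A_i y)^θ` on `[-2, 0]`, then they coincide. -/
theorem stmt6 (θ : ℝ) (hθ : 0 < θ)
    (A B A' B' : ℕ → ℝ)
    (hA : Antitone A) (hB : Antitone B) (hA' : Antitone A') (hB' : Antitone B')
    (hA0 : ∀ i, 0 ≤ A i) (hB0 : ∀ i, 0 ≤ B i) (hA'0 : ∀ i, 0 ≤ A' i) (hB'0 : ∀ i, 0 ≤ B' i)
    (hAs : Summable A) (hBs : Summable B) (hA's : Summable A') (hB's : Summable B')
    (γ γ' : ℝ) (hγ : 0 ≤ γ) (hγ' : 0 ≤ γ')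
    (heq : ∀ y ∈ Set.Icc (-2 : ℝ) 0,
      Real.exp (γ * y) * ∏' i, (1 + B i * y) / (1 - A i * y) ^ θ
        = Real.exp (γ' * y) * ∏' i, (1 + B' i * y) / (1 - A' i * y) ^ θ) :
    (∀ i, A i = A' i ∧ B i = B' i) ∧ γ = γ' := by
  set M : ℝ := max (max (A 0) (B 0)) (max (A' 0) (B' 0)) + 1 with hMdef
  have hM1 : 1 ≤ M := by
    have h0 : (0:ℝ) ≤ max (max (A 0) (B 0)) (max (A' 0) (B' 0)) :=
      le_trans (hA0 0) (le_max_of_le_left (le_max_left _ _))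
    rw [hMdef]; linarith
  have hM0 : (0:ℝ) < M := by linarith
  have hMA : A 0 < M := by
    have := le_max_of_le_left (le_max_left (A 0) (B 0))
      (c := max (A' 0) (B' 0))
    rw [hMdef]; linarith
  have hMB : B 0 < M := by
    have := le_max_of_le_left (le_max_right (A 0) (B 0))
      (c := max (A' 0) (B' 0))
    rw [hMdef]; linarith
  have hMA' : A' 0 < M := by
    have := le_max_of_le_right (le_max_left (A' 0) (B' 0))
      (b := max (A 0) (B 0))
    rw [hMdef]; linarith
  have hMB' : B' 0 < M := by
    have := le_max_of_le_right (le_max_right (A' 0) (B' 0))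
      (b := max (A 0) (B 0))
    rw [hMdef]; linarith
  have hδ0 : (0:ℝ) < 1/(2*M) := by
    apply div_pos one_pos (by linarith)
  set E : ℕ → ℝ := fun k => (if k = 0 then γ - γ' else 0) +
    ((θ * (∑' i, A i ^ (k+1)) - (-1:ℝ)^(k+1) * (∑' i, B i ^ (k+1))) / ((k:ℝ)+1)
     - (θ * (∑' i, A' i ^ (k+1)) - (-1:ℝ)^(k+1) * (∑' i, B' i ^ (k+1))) / ((k:ℝ)+1))
    with hEdef
  have h1 := Stmt6.Dsummable θ A B hA hB hA0 hB0 hAs hBs hM1 hMA hMB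
  have h2 := Stmt6.Dsummable θ A' B' hA' hB' hA'0 hB'0 hA's hB's hM1 hMA' hMB'
  have hEsum : Summable (fun k => |E k| * (1/(2*M))^(k+1)) := by
    have h3 : Summable (fun k : ℕ => |if k = 0 then γ - γ' else 0| * (1/(2*M))^(k+1)) := by
      apply summable_of_ne_finset_zero (s := {0})
      intro k hk
      simp only [Finset.mem_singleton] at hk
      simp [hk]
    apply Summable.of_nonneg_of_le (fun k => by positivity) (fun k => ?_) ((h3.add h1).add h2)
    have habs : |E k| ≤ |if k = 0 then γ - γ' else 0|
        + (|(θ * (∑' i, A i ^ (k+1)) - (-1:ℝ)^(k+1) * (∑' i, B i ^ (k+1))) / ((k:ℝ)+1)|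
         + |(θ * (∑' i, A' i ^ (k+1)) - (-1:ℝ)^(k+1) * (∑' i, B' i ^ (k+1))) / ((k:ℝ)+1)|) := by
      rw [hEdef]
      refine le_trans (abs_add_le _ _) ?_
      gcongr
      exact abs_sub _ _
    calc |E k| * (1/(2*M))^(k+1)
        ≤ (|if k = 0 then γ - γ' else 0|
          + (|(θ * (∑' i, A i ^ (k+1)) - (-1:ℝ)^(k+1) * (∑' i, B i ^ (k+1))) / ((k:ℝ)+1)|
           + |(θ * (∑' i, A' i ^ (k+1)) - (-1:ℝ)^(k+1) * (∑' i, B' i ^ (k+1))) / ((k:ℝ)+1)|))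
            * (1/(2*M))^(k+1) :=
          mul_le_mul_of_nonneg_right habs (by positivity)
      _ = |if k = 0 then γ - γ' else 0| * (1/(2*M))^(k+1)
          + |(θ * (∑' i, A i ^ (k+1)) - (-1:ℝ)^(k+1) * (∑' i, B i ^ (k+1))) / ((k:ℝ)+1)|
            * (1/(2*M))^(k+1)
          + |(θ * (∑' i, A' i ^ (k+1)) - (-1:ℝ)^(k+1) * (∑' i, B' i ^ (k+1))) / ((k:ℝ)+1)|
            * (1/(2*M))^(k+1) := by ring
  have hvanish : ∀ y ∈ Set.Ioo (-(1/(2*M))) (0:ℝ), ∑' k, E k * y^(k+1) = 0 := by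
    intro y hy
    have h12 : 1/(2*M) ≤ 1/2 := by
      rw [div_le_div_iff₀ (by linarith) (by norm_num)]
      linarith
    have hyIcc : y ∈ Set.Icc (-2:ℝ) 0 := ⟨by linarith [hy.1], hy.2.le⟩
    have he := heq y hyIcc
    rw [Stmt6.expand θ A B hA hB hA0 hB0 hAs hBs γ hM1 hMA hMB hy.1 hy.2,
        Stmt6.expand θ A' B' hA' hB' hA'0 hB'0 hA's hB's γ' hM1 hMA' hMB' hy.1 hy.2] at he
    have he2 := Real.exp_eq_exp.mp he
    have hyδ : |y| ≤ 1/(2*M) := by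
      rw [abs_of_neg hy.2]
      linarith [hy.1]
    have hbY : ∀ (D : ℕ → ℝ), Summable (fun k => |D k| * (1/(2*M))^(k+1)) →
        Summable (fun k => D k * y^(k+1)) := by
      intro D hD
      apply Summable.of_norm_bounded hD
      intro k
      rw [norm_mul, norm_pow, Real.norm_eq_abs, Real.norm_eq_abs]
      exact mul_le_mul_of_nonneg_left (pow_le_pow_left₀ (abs_nonneg y) hyδ (k+1)) (abs_nonneg _)
    have hs1 : Summable (fun k : ℕ =>
        ((θ * (∑' i, A i ^ (k+1)) - (-1:ℝ)^(k+1) * (∑' i, B i ^ (k+1))) / ((k:ℝ)+1))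
          * y^(k+1)) := hbY _ h1
    have hs2 : Summable (fun k : ℕ =>
        ((θ * (∑' i, A' i ^ (k+1)) - (-1:ℝ)^(k+1) * (∑' i, B' i ^ (k+1))) / ((k:ℝ)+1))
          * y^(k+1)) := hbY _ h2
    have hs3 : Summable (fun k : ℕ => (if k = 0 then γ - γ' else 0) * y^(k+1)) := by
      apply summable_of_ne_finset_zero (s := {0})
      intro k hk
      simp only [Finset.mem_singleton] at hk
      simp [hk]
    have hsum_ite : ∑' k : ℕ, (if k = 0 then γ - γ' else 0) * y^(k+1) = (γ - γ') * y := by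
      rw [tsum_eq_single 0 (fun b hb => by simp [if_neg hb])]
      simp
    calc ∑' k, E k * y^(k+1)
        = ∑' (k : ℕ), ((if k = 0 then γ - γ' else 0) * y^(k+1)
          + (((θ * (∑' i, A i ^ (k+1)) - (-1:ℝ)^(k+1) * (∑' i, B i ^ (k+1))) / ((k:ℝ)+1))
              * y^(k+1)
            - ((θ * (∑' i, A' i ^ (k+1)) - (-1:ℝ)^(k+1) * (∑' i, B' i ^ (k+1))) / ((k:ℝ)+1))
              * y^(k+1))) := by
          apply tsum_congr
          intro k
          simp only [hEdef]
          ring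
      _ = (γ - γ') * y
          + ((∑' (k : ℕ), ((θ * (∑' i, A i ^ (k+1)) - (-1:ℝ)^(k+1) * (∑' i, B i ^ (k+1)))
              / ((k:ℝ)+1)) * y^(k+1))
            - ∑' (k : ℕ), ((θ * (∑' i, A' i ^ (k+1)) - (-1:ℝ)^(k+1) * (∑' i, B' i ^ (k+1)))
              / ((k:ℝ)+1)) * y^(k+1)) := by
          rw [Summable.tsum_add hs3 (hs1.sub hs2), hsum_ite, Summable.tsum_sub hs1 hs2]
      _ = 0 := by linarith
  have hE0 := Stmt6.coeff_zero hδ0 E hEsum hvanish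
  have hDeq : ∀ k : ℕ, 1 ≤ k →
      θ * (∑' i, A i ^ (k+1)) - (-1:ℝ)^(k+1) * (∑' i, B i ^ (k+1))
        = θ * (∑' i, A' i ^ (k+1)) - (-1:ℝ)^(k+1) * (∑' i, B' i ^ (k+1)) := by
    intro k hk
    have h0 := hE0 k
    simp only [hEdef] at h0
    simp only [if_neg (by omega : ¬ k = 0), zero_add, sub_eq_zero] at h0
    have hc : ((k:ℝ)+1) ≠ 0 := by positivity
    field_simp at h0
    exact h0
  have hAB := Stmt6.seq_eq θ hθ A B A' B' hA hB hA' hB' hA0 hB0 hA'0 hB'0 hAs hBs hA's hB's hDeq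
  refine ⟨hAB, ?_⟩
  have hAeq : A = A' := funext fun i => (hAB i).1
  have hBeq : B = B' := funext fun i => (hAB i).2
  have h0 := hE0 0
  simp only [hEdef, if_pos rfl] at h0
  rw [hAeq, hBeq] at h0
  simp only [sub_self, add_zero, if_true] at h0
  linarith
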